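/- Let α be a real-valued random variable with |α| ≤ A almost surely for some constant A > 0, and let X be a real-valued random variable such that αX is integrable with E[αX] = 0 and E[exp(δ|X|)] ≤ C for some constants δ, C > 0. Then for every ω with 0 < ω < 1/A: E[exp(ω α δ X)] ≤ exp(C A² ω² / (1 − A ω)). -/

import Mathlib

open MeasureTheory Nat

lemma key_series' {u s : ℝ} (hu0 : 0 ≤ u) (hu1 : u < 1) (hs : 0 ≤ s) :
    Real.exp (u * s) ≤ 1 + u * s + Real.exp s * (u ^ 2 / (1 - u)) := by
  have hsum : Summable (fun n : ℕ => (u*s) ^ n / (n ! : ℝ)) :=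
    NormedSpace.expSeries_div_summable (u*s)
  have hgeo : Summable (fun k : ℕ => Real.exp s * u ^ (k + 2)) := by
    apply Summable.mul_left
    exact ((summable_geometric_of_lt_one hu0 hu1).mul_left (u^2)).congr (fun k => by ring)
  have hexp : Real.exp (u*s) = ∑' n : ℕ, (u*s) ^ n / (n ! : ℝ) := by
    rw [Real.exp_eq_exp_ℝ, NormedSpace.exp_eq_tsum_div]
  rw [hexp, ← Summable.sum_add_tsum_nat_add 2 hsum]
  have h1 : ∑ i ∈ Finset.range 2, (u*s) ^ i / (i ! : ℝ) = 1 + u * s := by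
    simp [Finset.sum_range_succ]
  rw [h1]
  have h2 : ∑' k : ℕ, (u*s) ^ (k + 2) / ((k + 2)! : ℝ) ≤ ∑' k : ℕ, Real.exp s * u ^ (k + 2) := by
    refine Summable.tsum_le_tsum (fun k => ?_) ((summable_nat_add_iff 2).2 hsum) hgeo
    have heq : (u*s) ^ (k+2) / ((k+2)! : ℝ) = u ^ (k+2) * (s ^ (k+2) / ((k+2)! : ℝ)) := by
      rw [mul_pow]; ring
    rw [heq]
    have hb : s ^ (k+2) / ((k+2)! : ℝ) ≤ Real.exp s := Real.pow_div_factorial_le_exp s hs _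
    calc u ^ (k+2) * (s ^ (k+2) / ((k+2)! : ℝ)) ≤ u ^ (k+2) * Real.exp s :=
          mul_le_mul_of_nonneg_left hb (pow_nonneg hu0 _)
      _ = Real.exp s * u ^ (k+2) := mul_comm _ _
  have h3 : ∑' k : ℕ, Real.exp s * u ^ (k + 2) = Real.exp s * (u ^ 2 / (1 - u)) := by
    rw [tsum_mul_left]
    congr 1
    have h4 : ∑' k : ℕ, u ^ (k + 2) = u ^ 2 * ∑' k : ℕ, u ^ k := by
      rw [← tsum_mul_left]; exact tsum_congr fun k => by ring
    rw [h4, tsum_geometric_of_lt_one hu0 hu1]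
    field_simp
  linarith

lemma key_pt' {u s t : ℝ} (hu0 : 0 ≤ u) (hu1 : u < 1) (hs : 0 ≤ s) (ht : |t| ≤ u * s) :
    Real.exp t ≤ 1 + t + Real.exp s * (u ^ 2 / (1 - u)) := by
  have h1 : Real.exp t - t ≤ Real.exp |t| - |t| := by
    rcases le_or_gt 0 t with h | h
    · rw [abs_of_nonneg h]
    · rw [abs_of_neg h]
      have hsinh := (Real.self_le_sinh_iff.2 (by linarith : (0:ℝ) ≤ -t))
      have : Real.sinh (-t) = (Real.exp (-t) - Real.exp t) / 2 := by
        rw [Real.sinh_eq]; ring_nf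
      nlinarith [this ▸ hsinh]
  have h2 : Real.exp |t| - |t| ≤ Real.exp (u * s) - u * s := by
    have hd : 0 ≤ u * s - |t| := by linarith
    have : Real.exp (u * s) = Real.exp |t| * Real.exp (u * s - |t|) := by
      rw [← Real.exp_add]; ring_nf
    nlinarith [Real.add_one_le_exp (u * s - |t|), Real.one_le_exp (abs_nonneg t)]
  have h3 := key_series' hu0 hu1 hs
  linarith

/-- Let α be a real random variable with |α| ≤ A a.s. (A > 0), and X a real random
variable with αX integrable, E[αX] = 0, and E[exp(δ|X|)] ≤ C for constants δ, C > 0.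
Then for every 0 < ω < 1/A: E[exp(ω α δ X)] ≤ exp(C A² ω² / (1 − A ω)). -/
theorem stmt2 {Ω : Type*} {m : MeasurableSpace Ω} (μ : Measure Ω)
    [IsProbabilityMeasure μ]
    (α X : Ω → ℝ) (A δ C : ℝ) (hA : 0 < A) (hδ : 0 < δ) (hC : 0 < C)
    (hαA : ∀ᵐ ω ∂μ, |α ω| ≤ A)
    (hint : Integrable (fun ω => α ω * X ω) μ)
    (hmean : ∫ ω, α ω * X ω ∂μ = 0)
    (hexpint : Integrable (fun ω => Real.exp (δ * |X ω|)) μ)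
    (hexp : ∫ ω, Real.exp (δ * |X ω|) ∂μ ≤ C)
    (w : ℝ) (hw0 : 0 < w) (hw1 : w < 1 / A) :
    ∫ ω, Real.exp (w * α ω * δ * X ω) ∂μ ≤
      Real.exp (C * A ^ 2 * w ^ 2 / (1 - A * w)) := by
  set u : ℝ := A * w with hu_def
  have hu0 : 0 ≤ u := le_of_lt (mul_pos hA hw0)
  have hu1 : u < 1 := by
    rw [hu_def]
    calc A * w < A * (1 / A) := by exact mul_lt_mul_of_pos_left hw1 hA
      _ = 1 := by field_simp
  have h1u : 0 < 1 - u := by linarith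
  -- the dominating function
  set g : Ω → ℝ := fun ω => 1 + w * δ * (α ω * X ω) + Real.exp (δ * |X ω|) * (u ^ 2 / (1 - u))
    with hg_def
  have hg_int : Integrable g μ :=
    ((integrable_const (1:ℝ)).add (hint.const_mul (w * δ))).add (hexpint.mul_const _)
  -- pointwise bound
  have hbnd : ∀ᵐ ω ∂μ, Real.exp (w * α ω * δ * X ω) ≤ g ω := by
    filter_upwards [hαA] with ω hα
    have hs : (0:ℝ) ≤ δ * |X ω| := mul_nonneg hδ.le (abs_nonneg _)
    have habs : |w * α ω * δ * X ω| ≤ u * (δ * |X ω|) := by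
      have : |w * α ω * δ * X ω| = w * δ * (|α ω| * |X ω|) := by
        rw [abs_mul, abs_mul, abs_mul, abs_of_pos hw0, abs_of_pos hδ]; ring
      rw [this, hu_def]
      have h8 : w * δ * (|α ω| * |X ω|) ≤ w * δ * (A * |X ω|) :=
        mul_le_mul_of_nonneg_left (mul_le_mul_of_nonneg_right hα (abs_nonneg _))
          (mul_nonneg hw0.le hδ.le)
      calc w * δ * (|α ω| * |X ω|) ≤ w * δ * (A * |X ω|) := h8
        _ = A * w * (δ * |X ω|) := by ring
    have := key_pt' hu0 hu1 hs habs
    calc Real.exp (w * α ω * δ * X ω)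
        ≤ 1 + w * α ω * δ * X ω + Real.exp (δ * |X ω|) * (u ^ 2 / (1 - u)) := this
      _ = g ω := by rw [hg_def]; ring_nf
  -- measurability of the exponential
  have hmeas : AEStronglyMeasurable (fun ω => Real.exp (w * α ω * δ * X ω)) μ := by
    have : (fun ω => Real.exp (w * α ω * δ * X ω)) =
        (fun ω => Real.exp ((w * δ) * (α ω * X ω))) := by
      funext ω; ring_nf
    rw [this]
    exact (Real.continuous_exp.comp (continuous_const.mul continuous_id)).comp_aestronglyMeasurable
      hint.aestronglyMeasurable
  have hf_int : Integrable (fun ω => Real.exp (w * α ω * δ * X ω)) μ := by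
    refine Integrable.mono' hg_int hmeas ?_
    filter_upwards [hbnd] with ω h
    rw [Real.norm_eq_abs, abs_of_pos (Real.exp_pos _)]
    exact h
  have hIg : ∫ ω, g ω ∂μ = 1 + (∫ ω, Real.exp (δ * |X ω|) ∂μ) * (u ^ 2 / (1 - u)) := by
    have e1 : Integrable (fun ω => 1 + w * δ * (α ω * X ω)) μ :=
      (integrable_const (1:ℝ)).add (hint.const_mul _)
    have e2 : Integrable (fun ω => Real.exp (δ * |X ω|) * (u ^ 2 / (1 - u))) μ :=
      hexpint.mul_const _
    have e3 : Integrable (fun ω : Ω => (1:ℝ)) μ := integrable_const _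
    rw [hg_def]
    rw [integral_add e1 e2, integral_add e3 (hint.const_mul _),
      integral_const, integral_const_mul, integral_mul_const, hmean]
    simp
  have hstep : ∫ ω, Real.exp (w * α ω * δ * X ω) ∂μ ≤ ∫ ω, g ω ∂μ :=
    integral_mono_ae hf_int hg_int hbnd
  have hfrac : (0:ℝ) ≤ u ^ 2 / (1 - u) := div_nonneg (sq_nonneg u) h1u.le
  have hfinal : 1 + (∫ ω, Real.exp (δ * |X ω|) ∂μ) * (u ^ 2 / (1 - u)) ≤
      Real.exp (C * A ^ 2 * w ^ 2 / (1 - A * w)) := by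
    have h5 : (∫ ω, Real.exp (δ * |X ω|) ∂μ) * (u ^ 2 / (1 - u)) ≤ C * (u ^ 2 / (1 - u)) :=
      mul_le_mul_of_nonneg_right hexp hfrac
    have h6 : C * (u ^ 2 / (1 - u)) = C * A ^ 2 * w ^ 2 / (1 - A * w) := by
      rw [hu_def]; field_simp
    have h7 := Real.add_one_le_exp (C * A ^ 2 * w ^ 2 / (1 - A * w))
    linarith
  linarith [hIg ▸ hstep]
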